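/- Consider ADMM for the unconstrained lifted ℓ1 problem with ψ(y) = (γ/2)‖A y - b‖_2² where A ∈ ℝ^{m×n}, b ∈ ℝ^m, γ > 0, ρ > 0, and set C_A := ‖AᵀA‖_2 (the spectral norm). Suppose the sequence (u^k, x^k, y^k, v^k) satisfies for every k: y^{k+1} = argmin_y ψ(y) + (ρ/2)‖y - (x^{k+1} + v^k/ρ)‖_2² (equivalently (ρ I + γ AᵀA) y^{k+1} = ρ x^{k+1} + v^k + γ Aᵀb) and v^{k+1} = v^k + ρ(x^{k+1} - y^{k+1}). Then v^{k+1} = ∇ψ(y^{k+1}) = γ Aᵀ(A y^{k+1} - b) for every k ≥ 0, and for every k ≥ 1, ‖x^{k+1} - y^{k+1}‖_2 ≤ (γ C_A / ρ) ‖y^{k+1} - y^k‖_2. -/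

import Mathlib

/-- The Euclidean (ℓ2) norm of a vector. -/
noncomputable def l2norm {k : ℕ} (z : Fin k → ℝ) : ℝ :=
  Real.sqrt (∑ i, z i ^ 2)

/-- The spectral (ℓ2 operator) norm of a square matrix. -/
noncomputable def specNorm {k : ℕ} (M : Matrix (Fin k) (Fin k) ℝ) : ℝ :=
  sSup {c : ℝ | ∃ y : Fin k → ℝ, l2norm y = 1 ∧ c = l2norm (M.mulVec y)}

lemma l2norm_eq {k : ℕ} (z : Fin k → ℝ) :
    l2norm z = ‖(WithLp.equiv 2 (Fin k → ℝ)).symm z‖ := by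
  rw [EuclideanSpace.norm_eq]
  simp [l2norm, Real.norm_eq_abs, sq_abs]

lemma l2norm_smul {k : ℕ} (c : ℝ) (z : Fin k → ℝ) :
    l2norm (c • z) = |c| * l2norm z := by
  simp only [l2norm, Pi.smul_apply, smul_eq_mul, mul_pow, ← Finset.mul_sum]
  rw [Real.sqrt_mul (sq_nonneg c), Real.sqrt_sq_eq_abs]

lemma l2norm_nonneg {k : ℕ} (z : Fin k → ℝ) : 0 ≤ l2norm z := Real.sqrt_nonneg _

lemma specNorm_bound {k : ℕ} (M : Matrix (Fin k) (Fin k) ℝ) (z : Fin k → ℝ) :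
    l2norm (M.mulVec z) ≤ specNorm M * l2norm z := by
  have key : ∀ w : Fin k → ℝ,
      l2norm (M.mulVec w) = ‖Matrix.toEuclideanCLM (𝕜 := ℝ) M ((WithLp.equiv _ _).symm w)‖ := by
    intro w
    rw [show Matrix.toEuclideanCLM (𝕜 := ℝ) M ((WithLp.equiv _ _).symm w) =
        (WithLp.equiv _ _).symm (M.mulVec w) from Matrix.toEuclideanCLM_toLp M w, l2norm_eq]
  have hbdd : BddAbove {c : ℝ | ∃ y : Fin k → ℝ, l2norm y = 1 ∧ c = l2norm (M.mulVec y)} := by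
    refine ⟨‖Matrix.toEuclideanCLM (𝕜 := ℝ) M‖, ?_⟩
    rintro c ⟨w, hw, rfl⟩
    rw [key]
    calc ‖Matrix.toEuclideanCLM (𝕜 := ℝ) M ((WithLp.equiv _ _).symm w)‖
        ≤ ‖Matrix.toEuclideanCLM (𝕜 := ℝ) M‖ * ‖(WithLp.equiv 2 (Fin k → ℝ)).symm w‖ :=
          (Matrix.toEuclideanCLM (𝕜 := ℝ) M).le_opNorm _
      _ = ‖Matrix.toEuclideanCLM (𝕜 := ℝ) M‖ := by rw [← l2norm_eq, hw, mul_one]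
  rcases eq_or_ne z 0 with rfl | hz
  · simp [l2norm, Matrix.mulVec_zero]
  · have hnz : l2norm z ≠ 0 := by
      rw [l2norm_eq]
      simpa using hz
    have hpos : 0 < l2norm z := lt_of_le_of_ne (l2norm_nonneg z) (Ne.symm hnz)
    set w := (l2norm z)⁻¹ • z with hw
    have hwn : l2norm w = 1 := by
      rw [hw, l2norm_smul, abs_of_pos (inv_pos.2 hpos), inv_mul_cancel₀ hnz]
    have hle : l2norm (M.mulVec w) ≤ specNorm M :=
      le_csSup hbdd ⟨w, hwn, rfl⟩
    have hz' : M.mulVec z = (l2norm z) • M.mulVec w := by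
      rw [hw, Matrix.mulVec_smul, smul_smul, mul_inv_cancel₀ hnz, one_smul]
    rw [hz', l2norm_smul, abs_of_pos hpos, mul_comm]
    exact mul_le_mul_of_nonneg_right hle (le_of_lt hpos)

open Matrix in
/-- ADMM for the unconstrained lifted ℓ1 problem with `ψ(y) = (γ/2)‖Ay - b‖²`: if the
`y`-update solves `(ρI + γAᵀA) y^{k+1} = ρ x^{k+1} + v^k + γ Aᵀ b` and
`v^{k+1} = v^k + ρ(x^{k+1} - y^{k+1})`, then `v^{k+1} = ∇ψ(y^{k+1}) = γAᵀ(Ay^{k+1} - b)` for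
all `k ≥ 0`, and `‖x^{k+1} - y^{k+1}‖ ≤ (γ C_A / ρ)‖y^{k+1} - y^k‖` for all `k ≥ 1`, where
`C_A = ‖AᵀA‖₂`. -/
theorem admm_dual_gradient_and_residual_bound {m n : ℕ}
    (A : Matrix (Fin m) (Fin n) ℝ) (b : Fin m → ℝ)
    (γ ρ : ℝ) (hγ : 0 < γ) (hρ : 0 < ρ)
    (x y v : ℕ → Fin n → ℝ)
    (hyupd : ∀ k : ℕ, ρ • y (k + 1) + γ • (Aᵀ * A).mulVec (y (k + 1)) =
      ρ • x (k + 1) + v k + γ • Aᵀ.mulVec b)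
    (hvupd : ∀ k : ℕ, v (k + 1) = v k + ρ • (x (k + 1) - y (k + 1))) :
    (∀ k : ℕ, v (k + 1) = γ • Aᵀ.mulVec (A.mulVec (y (k + 1)) - b)) ∧
    (∀ k : ℕ, 1 ≤ k →
      l2norm (x (k + 1) - y (k + 1)) ≤
        γ * specNorm (Aᵀ * A) / ρ * l2norm (y (k + 1) - y k)) := by
  have part1 : ∀ k : ℕ, v (k + 1) = γ • Aᵀ.mulVec (A.mulVec (y (k + 1)) - b) := by
    intro k
    have h1 := hyupd k
    have h2 := hvupd k
    have h3 : ρ • x (k + 1) - ρ • y (k + 1) =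
        γ • (Aᵀ * A).mulVec (y (k + 1)) - γ • Aᵀ.mulVec b - v k := by
      calc ρ • x (k + 1) - ρ • y (k + 1)
          = ρ • x (k + 1) + v k + γ • Aᵀ.mulVec b - ρ • y (k + 1) - v k
            - γ • Aᵀ.mulVec b := by abel
        _ = ρ • y (k + 1) + γ • (Aᵀ * A).mulVec (y (k + 1)) - ρ • y (k + 1) - v k
            - γ • Aᵀ.mulVec b := by rw [h1]
        _ = γ • (Aᵀ * A).mulVec (y (k + 1)) - γ • Aᵀ.mulVec b - v k := by abel
    rw [h2, smul_sub, Matrix.mulVec_sub, smul_sub, Matrix.mulVec_mulVec (y (k+1)) Aᵀ A, h3]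
    abel
  refine ⟨part1, ?_⟩
  intro k hk
  obtain ⟨j, rfl⟩ := Nat.exists_eq_add_of_le hk
  set K := 1 + j with hK
  have hvK : v K = γ • Aᵀ.mulVec (A.mulVec (y K) - b) := by
    have := part1 j
    rw [hK, Nat.add_comm]
    exact this
  have hres : x (K + 1) - y (K + 1) = (γ / ρ) • (Aᵀ * A).mulVec (y (K + 1) - y K) := by
    have h1 := hyupd K
    have heq : ρ • (x (K + 1) - y (K + 1)) = γ • (Aᵀ * A).mulVec (y (K + 1) - y K) := by
      rw [Matrix.mulVec_sub, smul_sub, smul_sub]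
      have h3 : ρ • x (K + 1) - ρ • y (K + 1) =
          γ • (Aᵀ * A).mulVec (y (K + 1)) - γ • Aᵀ.mulVec b - v K := by
        calc ρ • x (K + 1) - ρ • y (K + 1)
            = ρ • x (K + 1) + v K + γ • Aᵀ.mulVec b - ρ • y (K + 1) - v K
              - γ • Aᵀ.mulVec b := by abel
          _ = ρ • y (K + 1) + γ • (Aᵀ * A).mulVec (y (K + 1)) - ρ • y (K + 1) - v K
              - γ • Aᵀ.mulVec b := by rw [h1]
          _ = γ • (Aᵀ * A).mulVec (y (K + 1)) - γ • Aᵀ.mulVec b - v K := by abel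
      rw [h3, hvK, Matrix.mulVec_sub, smul_sub, Matrix.mulVec_mulVec (y K) Aᵀ A]
      abel
    have h4 := congrArg (fun z => ρ⁻¹ • z) heq
    simp only [smul_smul, inv_mul_cancel₀ (ne_of_gt hρ), one_smul] at h4
    rw [h4, div_eq_mul_inv, mul_comm ρ⁻¹ γ]
  rw [hres, l2norm_smul, abs_of_pos (div_pos hγ hρ)]
  have hb := specNorm_bound (Aᵀ * A) (y (K + 1) - y K)
  calc γ / ρ * l2norm ((Aᵀ * A).mulVec (y (K + 1) - y K))
      ≤ γ / ρ * (specNorm (Aᵀ * A) * l2norm (y (K + 1) - y K)) :=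
        mul_le_mul_of_nonneg_left hb (le_of_lt (div_pos hγ hρ))
    _ = γ * specNorm (Aᵀ * A) / ρ * l2norm (y (K + 1) - y K) := by ring
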